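/- Let S be a compact positive operator and A a bounded self-adjoint operator on a complex Hilbert space H, set K := S ∘ A (so K* = A ∘ S), and assume K is injective. Let (λ_j, f_j, g_j) be eigen-data satisfying the completeness hypothesis, with the map j ↦ λ_j injective and each eigenspace ker(K* − λ_j·I) one-dimensional (spanned by f_j). Then a vector ξ ∈ H is cyclic for K* — that is, the closed linear span of {(K*)^n ξ : n ∈ ℕ} equals H — if and only if ⟨ξ, g_j⟩ ≠ 0 for every j. Similarly, a vector η ∈ H is cyclic for K if and only if ⟨η, f_j⟩ ≠ 0 for every j. -/

import Mathlib

open ContinuousLinearMap Filter Topology Finset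

section Stmt12Aux

variable {H : Type*} [NormedAddCommGroup H] [InnerProductSpace ℂ H]

local notation "⟪" x ", " y "⟫" => @inner ℂ _ _ x y

private lemma mem_orth_span' {s : Set H} {x : H} (h : ∀ u ∈ s, ⟪u, x⟫ = 0) :
    x ∈ (Submodule.span ℂ s)ᗮ := by
  rw [Submodule.mem_orthogonal]
  intro u hu
  induction hu using Submodule.span_induction with
  | mem u hu => exact h _ hu
  | zero => simp
  | add u v _ _ ihu ihv => rw [inner_add_left, ihu, ihv, add_zero]
  | smul c u _ ihu => rw [inner_smul_left, ihu, mul_zero]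

lemma orth_closure' [CompleteSpace H] (F : Submodule ℂ H) :
    F.topologicalClosureᗮ = Fᗮ := by
  rw [← Submodule.orthogonal_orthogonal_eq_closure, Submodule.triorthogonal_eq_orthogonal]

lemma hasSum_proj' [CompleteSpace H] {v : ℕ → H} (hv : Orthonormal ℂ v) (w : H) :
    HasSum (fun i => ⟪v i, w⟫ • v i)
      (Submodule.orthogonalProjectionOnto (Submodule.span ℂ (Set.range v)).topologicalClosure w : H) := by
  set E := (Submodule.span ℂ (Set.range v)).topologicalClosure with hE
  haveI : CompleteSpace E := (Submodule.isClosed_topologicalClosure _).completeSpace_coe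
  have hmem : ∀ i, v i ∈ E := fun i =>
    Submodule.le_topologicalClosure _ (Submodule.subset_span ⟨i, rfl⟩)
  set v' : ℕ → E := fun i => ⟨v i, hmem i⟩ with hv'def
  have hv' : Orthonormal ℂ v' := hv.codRestrict E hmem
  have hsp : (Submodule.span ℂ (Set.range v'))ᗮ = ⊥ := by
    rw [Submodule.eq_bot_iff]
    intro z hz
    have hz0 : ∀ i, ⟪v i, (z : H)⟫ = 0 := by
      intro i
      have h1 := (Submodule.mem_orthogonal _ z).mp hz _ (Submodule.subset_span ⟨i, rfl⟩)
      simpa [Submodule.coe_inner] using h1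
    have hEo : Eᗮ = (Submodule.span ℂ (Set.range v))ᗮ := orth_closure' _
    have hzE : (z : H) ∈ Eᗮ := by
      rw [hEo]
      exact mem_orth_span' (by rintro u ⟨i, rfl⟩; exact hz0 i)
    have hz1 : (z : H) = 0 := by
      have h2 := (Submodule.mem_orthogonal E ((z : H))).mp hzE (z : H) z.2
      rwa [inner_self_eq_zero] at h2
    exact Subtype.ext hz1
  let b : HilbertBasis ℕ ℂ E := HilbertBasis.mkOfOrthogonalEqBot hv' hsp
  have hb : ∀ i, (b i : H) = v i := fun i => by
    rw [show ⇑b = v' from HilbertBasis.coe_mkOfOrthogonalEqBot hv' hsp]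
  have h := (b.hasSum_orthogonalProjection w).mapL E.subtypeL
  convert h using 2 with i
  · rw [map_smul]
    simp [hb]
  · rfl

private lemma moment' {l : ℕ → ℝ} (hl0 : ∀ j, l j ≠ 0) (hinj : Function.Injective l)
    (hto : Tendsto l atTop (𝓝 0)) {a : ℕ → ℂ} (ha : Summable fun j => ‖a j‖)
    (hmom : ∀ n : ℕ, 1 ≤ n → ∑' j, (l j : ℂ) ^ n * a j = 0) :
    ∀ j, a j = 0 := by
  by_contra hcon
  push_neg at hcon
  obtain ⟨j0, hj0⟩ := hcon
  have h1 : (0:ℝ) < |l j0| := abs_pos.mpr (hl0 j0)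
  have hball : ∀ᶠ x in 𝓝 (0:ℝ), |x| < |l j0| := by
    filter_upwards [Metric.ball_mem_nhds (0:ℝ) h1] with x hx
    simpa [Real.dist_eq] using hx
  obtain ⟨N, hN⟩ := eventually_atTop.mp (hto.eventually hball)
  have hj0N : j0 < N := by
    by_contra h; push_neg at h; exact absurd (hN j0 h) (lt_irrefl _)
  set F : Finset ℕ := (Finset.range N).filter (fun j => a j ≠ 0 ∧ |l j0| ≤ |l j|) with hF
  have hj0F : j0 ∈ F := by
    simp only [hF, Finset.mem_filter, Finset.mem_range]
    exact ⟨hj0N, hj0, le_refl _⟩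
  obtain ⟨jm, hjmF, hjmmax⟩ := F.exists_max_image (fun j => |l j|) ⟨j0, hj0F⟩
  have hajm : a jm ≠ 0 := ((Finset.mem_filter.mp hjmF).2).1
  set μ := |l jm| with hμ
  have hμpos : 0 < μ := abs_pos.mpr (hl0 jm)
  have hj0μ : |l j0| ≤ μ := ((Finset.mem_filter.mp hjmF).2).2
  have hbound : ∀ j, a j ≠ 0 → |l j| ≤ μ := by
    intro j hj
    rcases le_or_gt (|l j0|) (|l j|) with h | h
    · have hjN : j < N := by
        by_contra hh; push_neg at hh
        exact absurd h (not_le.mpr (hN j hh))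
      exact hjmmax j (by
        simp only [hF, Finset.mem_filter, Finset.mem_range]
        exact ⟨hjN, hj, h⟩)
    · exact h.le.trans hj0μ
  set r : ℕ → ℂ := fun j => (l j : ℂ) / (l jm : ℂ) with hr
  have hlm0 : (l jm : ℂ) ≠ 0 := Complex.ofReal_ne_zero.mpr (hl0 jm)
  have hrn : ∀ j, ‖r j‖ = |l j| / μ := by
    intro j
    rw [hr]
    simp [norm_div, Complex.norm_real, Real.norm_eq_abs, hμ]
  have hrsum : ∀ n : ℕ, 1 ≤ n → ∑' j, r j ^ n * a j = 0 := by
    intro n hn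
    have h1 : (fun j => r j ^ n * a j) = fun j => ((l jm : ℂ) ^ n)⁻¹ * ((l j : ℂ) ^ n * a j) := by
      funext j
      rw [hr]
      rw [div_pow, div_eq_mul_inv, mul_comm ((l j:ℂ)^n) _, mul_assoc]
    rw [h1, tsum_mul_left, hmom n hn, mul_zero]
  have hbnd : ∀ (n : ℕ) (j : ℕ), ‖r j ^ n * a j‖ ≤ ‖a j‖ := by
    intro n j
    by_cases hj : a j = 0
    · simp [hj]
    · rw [norm_mul, norm_pow]
      have h1 : ‖r j‖ ≤ 1 := by
        rw [hrn j]
        exact div_le_one_of_le₀ (hbound j hj) hμpos.le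
      have h2 : ‖r j‖ ^ n ≤ 1 := pow_le_one₀ (norm_nonneg _) h1
      exact mul_le_of_le_one_left (norm_nonneg _) h2
  have hlim : ∀ (s : ℕ → ℕ), (∀ n, 1 ≤ s n) → ∀ G : ℕ → ℂ,
      (∀ j, Tendsto (fun n => r j ^ s n * a j) atTop (𝓝 (G j))) → ∑' j, G j = 0 := by
    intro s hs1 G hG
    have h1 : Tendsto (fun n => ∑' j, r j ^ s n * a j) atTop (𝓝 (∑' j, G j)) :=
      tendsto_tsum_of_dominated_convergence ha hG
        (Eventually.of_forall fun n j => hbnd (s n) j)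
    have h2 : (fun n => ∑' j, r j ^ s n * a j) = fun _ => (0:ℂ) := by
      funext n; exact hrsum (s n) (hs1 n)
    rw [h2] at h1
    exact tendsto_nhds_unique h1 tendsto_const_nhds
  have hrval1 : ∀ j, l j = l jm → r j = 1 := by
    intro j hj
    show (l j : ℂ) / (l jm : ℂ) = 1
    rw [hj]; exact div_self hlm0
  have hrvalneg : ∀ j, l j = -l jm → r j = -1 := by
    intro j hj
    show (l j : ℂ) / (l jm : ℂ) = -1
    rw [hj]
    push_cast
    rw [neg_div, div_self hlm0]
  have hrlt : ∀ j, a j ≠ 0 → l j ≠ l jm → l j ≠ -l jm → ‖r j‖ < 1 := by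
    intro j hj hne1 hne2
    rw [hrn j, div_lt_one hμpos]
    refine lt_of_le_of_ne (hbound j hj) fun heq => ?_
    rcases abs_eq_abs.mp heq with h | h
    · exact hne1 h
    · exact hne2 h
  -- limits along even exponents
  have hGeven : ∀ j, Tendsto (fun n => r j ^ (2*(n+1)) * a j) atTop
      (𝓝 (if l j = l jm then a j else if l j = -l jm then a j else 0)) := by
    intro j
    by_cases h1 : l j = l jm
    · rw [if_pos h1]
      have : (fun n => r j ^ (2*(n+1)) * a j) = fun _ => a j := by
        funext n; rw [hrval1 j h1, one_pow, one_mul]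
      rw [this]; exact tendsto_const_nhds
    · rw [if_neg h1]
      by_cases h2 : l j = -l jm
      · rw [if_pos h2]
        have : (fun n => r j ^ (2*(n+1)) * a j) = fun _ => a j := by
          funext n
          rw [hrvalneg j h2, pow_mul, neg_one_sq, one_pow, one_mul]
        rw [this]; exact tendsto_const_nhds
      · rw [if_neg h2]
        by_cases ha0 : a j = 0
        · have : (fun n => r j ^ (2*(n+1)) * a j) = fun _ => (0:ℂ) := by
            funext n; rw [ha0, mul_zero]
          rw [this]; exact tendsto_const_nhds
        · have hpow : Tendsto (fun m => r j ^ m) atTop (𝓝 0) :=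
            tendsto_pow_atTop_nhds_zero_of_norm_lt_one (hrlt j ha0 h1 h2)
          have hmono : StrictMono (fun n : ℕ => 2*(n+1)) := fun x y h => by simp only []; omega
          have := (hpow.comp hmono.tendsto_atTop).mul_const (a j)
          simpa using this
  -- limits along odd exponents
  have hGodd : ∀ j, Tendsto (fun n => r j ^ (2*(n+1)+1) * a j) atTop
      (𝓝 (if l j = l jm then a j else if l j = -l jm then -a j else 0)) := by
    intro j
    by_cases h1 : l j = l jm
    · rw [if_pos h1]
      have : (fun n => r j ^ (2*(n+1)+1) * a j) = fun _ => a j := by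
        funext n; rw [hrval1 j h1, one_pow, one_mul]
      rw [this]; exact tendsto_const_nhds
    · rw [if_neg h1]
      by_cases h2 : l j = -l jm
      · rw [if_pos h2]
        have : (fun n => r j ^ (2*(n+1)+1) * a j) = fun _ => -a j := by
          funext n
          rw [hrvalneg j h2, pow_succ, pow_mul, neg_one_sq, one_pow, one_mul, neg_one_mul]
        rw [this]; exact tendsto_const_nhds
      · rw [if_neg h2]
        by_cases ha0 : a j = 0
        · have : (fun n => r j ^ (2*(n+1)+1) * a j) = fun _ => (0:ℂ) := by
            funext n; rw [ha0, mul_zero]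
          rw [this]; exact tendsto_const_nhds
        · have hpow : Tendsto (fun m => r j ^ m) atTop (𝓝 0) :=
            tendsto_pow_atTop_nhds_zero_of_norm_lt_one (hrlt j ha0 h1 h2)
          have hmono : StrictMono (fun n : ℕ => 2*(n+1)+1) := fun x y h => by simp only []; omega
          have := (hpow.comp hmono.tendsto_atTop).mul_const (a j)
          simpa using this
  have heven := hlim (fun n => 2*(n+1)) (fun n => by show 1 ≤ 2*(n+1); omega) _ hGeven
  have hodd := hlim (fun n => 2*(n+1)+1) (fun n => by show 1 ≤ 2*(n+1)+1; omega) _ hGodd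
  by_cases hex : ∃ k, l k = -l jm
  · obtain ⟨k, hk⟩ := hex
    have hkjm : k ≠ jm := by
      intro h
      rw [h] at hk
      exact hl0 jm (by linarith)
    have hGe : (fun j => if l j = l jm then a j else if l j = -l jm then a j else 0)
        = fun j => (if j = jm then a jm else 0) + (if j = k then a k else 0) := by
      funext j
      by_cases hj : j = jm
      · subst hj
        rw [if_pos rfl, if_pos rfl, if_neg hkjm.symm, add_zero]
      · rw [if_neg hj]
        have hne1 : l j ≠ l jm := fun h => hj (hinj h)
        rw [if_neg hne1]
        by_cases hj2 : j = k
        · subst hj2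
          rw [if_pos hk, if_pos rfl, zero_add]
        · have hne2 : l j ≠ -l jm := fun h => hj2 (hinj (h.trans hk.symm))
          rw [if_neg hne2, if_neg hj2, add_zero]
    have hGo : (fun j => if l j = l jm then a j else if l j = -l jm then -a j else 0)
        = fun j => (if j = jm then a jm else 0) + (if j = k then -a k else 0) := by
      funext j
      by_cases hj : j = jm
      · subst hj
        rw [if_pos rfl, if_pos rfl, if_neg hkjm.symm, add_zero]
      · rw [if_neg hj]
        have hne1 : l j ≠ l jm := fun h => hj (hinj h)
        rw [if_neg hne1]
        by_cases hj2 : j = k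
        · subst hj2
          rw [if_pos hk, if_pos rfl, zero_add]
        · have hne2 : l j ≠ -l jm := fun h => hj2 (hinj (h.trans hk.symm))
          rw [if_neg hne2, if_neg hj2, add_zero]
    rw [hGe] at heven
    rw [hGo] at hodd
    have he2 : a jm + a k = 0 := by
      rw [← ((hasSum_ite_eq jm (a jm)).add (hasSum_ite_eq k (a k))).tsum_eq]
      exact heven
    have ho2 : a jm + -a k = 0 := by
      rw [← ((hasSum_ite_eq jm (a jm)).add (hasSum_ite_eq k (-a k))).tsum_eq]
      exact hodd
    exact hajm (by linear_combination (he2 + ho2) / 2)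
  · push_neg at hex
    have hGe : (fun j => if l j = l jm then a j else if l j = -l jm then a j else 0)
        = fun j => (if j = jm then a jm else 0) := by
      funext j
      by_cases hj : j = jm
      · subst hj; rw [if_pos rfl, if_pos rfl]
      · have hne1 : l j ≠ l jm := fun h => hj (hinj h)
        rw [if_neg hne1, if_neg (hex j), if_neg hj]
    rw [hGe] at heven
    rw [(hasSum_ite_eq jm (a jm)).tsum_eq] at heven
    exact hajm heven

private lemma compact_null' [CompleteSpace H] {S : H →L[ℂ] H} (hsa : IsSelfAdjoint S)
    (hcpt : IsCompactOperator (⇑S)) {v : ℕ → H} (hv : Orthonormal ℂ v) :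
    Tendsto (fun n => S (v n)) atTop (𝓝 0) := by
  have hSmv : ∀ x y : H, ⟪S x, y⟫ = ⟪x, S y⟫ := fun x y => by
    conv_lhs => rw [← hsa.adjoint_eq]
    exact adjoint_inner_left S y x
  have hweak : ∀ u : H, Tendsto (fun n => ⟪u, v n⟫) atTop (𝓝 0) := by
    intro u
    have hsum := (hv.inner_products_summable u).tendsto_atTop_zero
    rw [tendsto_zero_iff_norm_tendsto_zero]
    have h1 : Tendsto (fun n => ‖⟪v n, u⟫‖) atTop (𝓝 0) := by
      have h2 := hsum.sqrt
      rw [Real.sqrt_zero] at h2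
      convert h2 using 2 with n
      rw [Real.sqrt_sq (norm_nonneg _)]
    convert h1 using 2 with n
    rw [← inner_conj_symm, RCLike.norm_conj]
  by_contra hcon
  rw [Metric.tendsto_atTop] at hcon
  push_neg at hcon
  obtain ⟨ε, hε, hfreq⟩ := hcon
  have hfreq' : ∀ N, ∃ n > N, ε ≤ ‖S (v n)‖ := by
    intro N
    obtain ⟨n, hn, h⟩ := hfreq (N + 1)
    exact ⟨n, by omega, by rwa [dist_zero_right] at h⟩
  obtain ⟨φ, hφmono, hφ⟩ := extraction_of_frequently_atTop (frequently_atTop'.mpr hfreq')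
  have hcpt' : IsCompactOperator ⇑(S : H →ₗ[ℂ] H) := by simpa using hcpt
  have hK := hcpt'.isCompact_closure_image_closedBall (𝕜₁ := ℂ) 1
  have hmem : ∀ k, S (v (φ k)) ∈ closure (⇑(S : H →ₗ[ℂ] H) '' Metric.closedBall 0 1) := by
    intro k
    apply subset_closure
    exact ⟨v (φ k), by simp [hv.1 (φ k)], rfl⟩
  obtain ⟨p, hp, ψ, hψmono, hψ⟩ := hK.tendsto_subseq hmem
  have hεp : ε ≤ ‖p‖ := by
    have := hψ.norm
    exact ge_of_tendsto' this fun k => hφ (ψ k)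
  have h3 : Tendsto (fun k => ⟪p, S (v (φ (ψ k)))⟫) atTop (𝓝 ⟪p, p⟫) :=
    (tendsto_const_nhds.inner hψ)
  have h4 : Tendsto (fun k => ⟪p, S (v (φ (ψ k)))⟫) atTop (𝓝 0) := by
    have h5 : (fun k => ⟪p, S (v (φ (ψ k)))⟫) = (fun n => ⟪S p, v n⟫) ∘ (fun k => φ (ψ k)) := by
      funext k; simp only [Function.comp_apply]; rw [← hSmv]
    rw [h5]
    exact (hweak (S p)).comp ((hφmono.comp hψmono).tendsto_atTop)
  have : (⟪p, p⟫ : ℂ) = 0 := tendsto_nhds_unique h3 h4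
  rw [inner_self_eq_zero] at this
  rw [this, norm_zero] at hεp
  linarith

private lemma engine' [CompleteSpace H] {e : ℕ → H} (he : Orthonormal ℂ e)
    {l : ℕ → ℝ} (hl0 : ∀ j, l j ≠ 0) (hlinj : Function.Injective l)
    (hto : Tendsto l atTop (𝓝 0))
    {x0 w : H} (hc : ∀ j, ⟪e j, x0⟫ ≠ 0)
    {Z : ℕ → H}
    (hZmem : ∀ m : ℕ, 1 ≤ m → Z m ∈ (Submodule.span ℂ (Set.range e)).topologicalClosure)
    (hZcoef : ∀ (j m : ℕ), 1 ≤ m → ⟪e j, Z m⟫ = (l j : ℂ) ^ m * ⟪e j, x0⟫)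
    (hZw : ∀ m : ℕ, 1 ≤ m → ⟪Z m, w⟫ = 0) :
    ∀ j, ⟪e j, w⟫ = 0 := by
  haveI : CompleteSpace (Submodule.span ℂ (Set.range e)).topologicalClosure :=
    (Submodule.isClosed_topologicalClosure _).completeSpace_coe
  have hproj := hasSum_proj' he w
  have hsum_a : Summable fun j => ‖(starRingEnd ℂ) ⟪e j, x0⟫ * ⟪e j, w⟫‖ := by
    have hc2 := he.inner_products_summable x0
    have hd2 := he.inner_products_summable w
    apply Summable.of_nonneg_of_le (fun j => norm_nonneg _) (fun j => ?_)
      ((hc2.add hd2).div_const 2)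
    rw [norm_mul, RCLike.norm_conj]
    nlinarith [sq_nonneg (‖⟪e j, x0⟫‖ - ‖⟪e j, w⟫‖), norm_nonneg (⟪e j, x0⟫ : ℂ),
      norm_nonneg (⟪e j, w⟫ : ℂ)]
  have hmom : ∀ n : ℕ, 1 ≤ n →
      ∑' j, (l j : ℂ) ^ n * ((starRingEnd ℂ) ⟪e j, x0⟫ * ⟪e j, w⟫) = 0 := by
    intro n hn
    have hZE := hZmem n hn
    have h1 : ⟪Z n, w⟫ = ⟪Z n,
        (Submodule.orthogonalProjectionOnto (Submodule.span ℂ (Set.range e)).topologicalClosure w : H)⟫ := by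
      have hmem2 := Submodule.sub_starProjection_mem_orthogonal
        (K := (Submodule.span ℂ (Set.range e)).topologicalClosure) w
      have h3 := (Submodule.mem_orthogonal _ _).mp hmem2 (Z n) hZE
      rw [inner_sub_right] at h3
      exact sub_eq_zero.mp h3
    have h2 : HasSum (fun i => ⟪e i, w⟫ * ⟪Z n, e i⟫) (⟪Z n,
        (Submodule.orthogonalProjectionOnto (Submodule.span ℂ (Set.range e)).topologicalClosure w : H)⟫) := by
      have hm := hproj.mapL (innerSL ℂ (Z n))
      convert hm using 2 with i
      · rfl
      · rw [innerSL_apply_apply, inner_smul_right]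
      · rfl
    have h3 : (fun i => ⟪e i, w⟫ * ⟪Z n, e i⟫)
        = fun i => (l i : ℂ) ^ n * ((starRingEnd ℂ) ⟪e i, x0⟫ * ⟪e i, w⟫) := by
      funext i
      rw [← inner_conj_symm (Z n) (e i), hZcoef i n hn]
      simp only [map_mul, map_pow, Complex.conj_ofReal]
      ring
    rw [h3] at h2
    rw [h2.tsum_eq, ← h1, hZw n hn]
  have hz := moment' hl0 hlinj hto hsum_a hmom
  intro j
  rcases mul_eq_zero.mp (hz j) with h | h
  · exact absurd (by simpa using congrArg (starRingEnd ℂ) h) (hc j)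
  · exact h

end Stmt12Aux

/-- **Cyclic vectors.** Let `K = S ∘ A` (S compact positive, A bounded self-adjoint) be
injective, with simple nonzero eigenvalues `λ_j` and eigen-data `(λ_j, f_j, g_j)`
satisfying the completeness hypothesis. Then `ξ` is cyclic for `K*` iff `⟨ξ, g_j⟩ ≠ 0`
for all `j`, and `η` is cyclic for `K` iff `⟨η, f_j⟩ ≠ 0` for all `j`. -/
theorem stmt12
    {H : Type*} [NormedAddCommGroup H] [InnerProductSpace ℂ H] [CompleteSpace H]
    (S A : H →L[ℂ] H)
    (hS_sa : IsSelfAdjoint S)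
    (hS_pos : ∀ x : H, x ≠ 0 → 0 < (inner ℂ (S x) x : ℂ).re)
    (hS_compact : IsCompactOperator (⇑S))
    (hA_sa : IsSelfAdjoint A)
    (hK_inj : Function.Injective (⇑(S ∘L A)))
    -- `R` is the positive square root of `S`
    (R : H →L[ℂ] H)
    (hR_sa : IsSelfAdjoint R)
    (hR_pos : ∀ x : H, 0 ≤ (inner ℂ (R x) x : ℂ).re)
    (hR_sq : R ∘L R = S)
    -- eigen-data
    (lam : ℕ → ℝ) (hlam : ∀ n, lam n ≠ 0)
    (f : ℕ → H) (hf : ∀ n, adjoint (S ∘L A) (f n) = (lam n : ℂ) • f n)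
    (g : ℕ → H) (hg : ∀ n, g n = S (f n))
    (horth : Orthonormal ℂ (fun n => R (f n)))
    (hcomplete : ∀ x : H, R (adjoint (S ∘L A) x) ∈
      (Submodule.span ℂ (Set.range fun n => R (f n))).topologicalClosure)
    -- the eigenvalues are simple
    (hlam_inj : Function.Injective lam)
    (hsimple : ∀ j, LinearMap.ker ((adjoint (S ∘L A) - (lam j : ℂ) • (1 : H →L[ℂ] H) : H →L[ℂ] H) : H →ₗ[ℂ] H)
      = Submodule.span ℂ {f j}) :
    (∀ ξ : H,
      (Submodule.span ℂ
        (Set.range fun n : ℕ => ((adjoint (S ∘L A)) ^ n) ξ)).topologicalClosure = ⊤ ↔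
      ∀ j, (inner ℂ (g j) ξ : ℂ) ≠ 0) ∧
    (∀ η : H,
      (Submodule.span ℂ
        (Set.range fun n : ℕ => ((S ∘L A) ^ n) η)).topologicalClosure = ⊤ ↔
      ∀ j, (inner ℂ (f j) η : ℂ) ≠ 0) := by
  classical
  set K := S ∘L A with hK
  set Ks := adjoint K with hKs
  have hKs_eq : Ks = A ∘L S := by
    rw [hKs, hK, adjoint_comp, hA_sa.adjoint_eq, hS_sa.adjoint_eq]
  have hRmv : ∀ x y : H, (inner ℂ (R x) y : ℂ) = inner ℂ x (R y) := fun x y => by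
    conv_lhs => rw [← hR_sa.adjoint_eq]
    exact adjoint_inner_left R y x
  have hAmv : ∀ x y : H, (inner ℂ (A x) y : ℂ) = inner ℂ x (A y) := fun x y => by
    conv_lhs => rw [← hA_sa.adjoint_eq]
    exact adjoint_inner_left A y x
  have hSR : ∀ x : H, S x = R (R x) := fun x => by rw [← hR_sq]; rfl
  have hRinj : ∀ x : H, R x = 0 → x = 0 := by
    intro x hx
    by_contra h0
    have hp := hS_pos x h0
    have h3 : (inner ℂ x (S x) : ℂ) = 0 := by
      rw [hSR, ← hRmv, hx, inner_zero_left]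
    have h5 : (inner ℂ (S x) x : ℂ).re = (inner ℂ x (S x) : ℂ).re := by
      rw [← inner_conj_symm x (S x)]
      exact (Complex.conj_re _).symm
    rw [h3] at h5
    simp only [Complex.zero_re] at h5
    linarith
  have hSinj : ∀ x : H, S x = 0 → x = 0 := by
    intro x hx
    exact hRinj x (hRinj (R x) (by rw [← hSR]; exact hx))
  set e : ℕ → H := fun n => R (f n) with he_def
  have hej : ∀ j, e j = R (f j) := fun j => by rw [he_def]
  have hfne : ∀ j, f j ≠ 0 := by
    intro j hfj
    have h1 := horth.1 j
    rw [hej j, hfj, map_zero, norm_zero] at h1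
    norm_num at h1
  have hgR : ∀ j, g j = R (e j) := fun j => by rw [hg j, hSR, hej]
  have hgne : ∀ j, g j ≠ 0 := fun j hgj =>
    hfne j (hSinj (f j) (by rw [← hg j]; exact hgj))
  have hKsf : ∀ j, Ks (f j) = (lam j : ℂ) • f j := hf
  have hKg : ∀ j, K (g j) = (lam j : ℂ) • g j := by
    intro j
    rw [hg j]
    have h1 : K (S (f j)) = S (Ks (f j)) := by rw [hKs_eq]; rfl
    rw [h1, hKsf j, map_smul, ← hg j]
  have hKpowg : ∀ (n : ℕ) (j : ℕ), (K ^ n) (g j) = ((lam j : ℂ)) ^ n • g j := by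
    intro n
    induction n with
    | zero => intro j; simp
    | succ n ih =>
      intro j
      have h1 : (K ^ (n+1)) (g j) = (K ^ n) (K (g j)) := by rw [pow_succ]; rfl
      rw [h1, hKg j, map_smul, ih j, smul_smul, ← pow_succ']
  have hcoefKs : ∀ (j : ℕ) (x : H) (n : ℕ),
      (inner ℂ (g j) ((Ks ^ n) x) : ℂ) = ((lam j : ℂ)) ^ n * inner ℂ (g j) x := by
    intro j x n
    have h1 : (Ks : H →L[ℂ] H) ^ n = adjoint (K ^ n) := by
      rw [hKs, ← star_eq_adjoint, ← star_eq_adjoint, ← star_pow]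
    rw [h1, adjoint_inner_right, hKpowg n j, inner_smul_left, map_pow, Complex.conj_ofReal]
  -- eigenvalues tend to zero
  have hSe := compact_null' hS_sa hS_compact horth
  have hlam_bound : ∀ j, |lam j| ≤ ‖A‖ * ‖S (e j)‖ := by
    intro j
    have h2 : R (A (R (e j))) = (lam j : ℂ) • e j := by
      have h3 : R (e j) = S (f j) := by rw [hej, ← hSR]
      rw [h3]
      have h4 : A (S (f j)) = Ks (f j) := by rw [hKs_eq]; rfl
      rw [h4, hKsf j, map_smul, ← hej]
    have h4 : (inner ℂ (e j) (e j) : ℂ) = 1 := by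
      have := orthonormal_iff_ite.mp horth j j
      simpa [← hej] using this
    have h1 : ((lam j : ℂ)) = inner ℂ (e j) (R (A (R (e j)))) := by
      rw [h2, inner_smul_right, h4, mul_one]
    have h5 : ‖((lam j : ℂ))‖ = |lam j| := by
      rw [Complex.norm_real, Real.norm_eq_abs]
    rw [← h5, h1, ← hRmv]
    have hnorm1 : ‖e j‖ = 1 := by rw [hej]; exact horth.1 j
    have hRe2 : ‖R (e j)‖ ^ 2 ≤ ‖S (e j)‖ := by
      have h7 : ‖R (e j)‖ ^ 2 = (inner ℂ (R (e j)) (R (e j)) : ℂ).re := by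
        rw [← RCLike.re_to_complex, @inner_self_eq_norm_sq ℂ]
      have h8 : (inner ℂ (R (e j)) (R (e j)) : ℂ) = inner ℂ (e j) (S (e j)) := by
        rw [hRmv, ← hSR]
      have h9 : (inner ℂ (e j) (S (e j)) : ℂ).re ≤ ‖(inner ℂ (e j) (S (e j)) : ℂ)‖ := by
        exact Complex.re_le_norm _
      have h10 : ‖(inner ℂ (e j) (S (e j)) : ℂ)‖ ≤ ‖e j‖ * ‖S (e j)‖ := norm_inner_le_norm _ _
      rw [hnorm1, one_mul] at h10
      rw [h7, h8]
      linarith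
    calc ‖(inner ℂ (R (e j)) (A (R (e j))) : ℂ)‖
        ≤ ‖R (e j)‖ * ‖A (R (e j))‖ := norm_inner_le_norm _ _
      _ ≤ ‖R (e j)‖ * (‖A‖ * ‖R (e j)‖) := by
          gcongr
          · exact A.le_opNorm _
      _ = ‖A‖ * ‖R (e j)‖ ^ 2 := by ring
      _ ≤ ‖A‖ * ‖S (e j)‖ := by gcongr
  have hlamlim : Tendsto lam atTop (𝓝 0) := by
    have hb : Tendsto (fun j => ‖A‖ * ‖S (e j)‖) atTop (𝓝 0) := by
      have h1 := hSe.norm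
      simp only [norm_zero] at h1
      simpa using h1.const_mul ‖A‖
    exact squeeze_zero_norm (fun j => by rw [Real.norm_eq_abs]; exact hlam_bound j) hb
  -- the closed span E and basic completeness facts
  have hT0 : ∀ u : H,
      (∀ v ∈ (Submodule.span ℂ (Set.range e)).topologicalClosure, (inner ℂ v u : ℂ) = 0) →
      R (A (R u)) = 0 := by
    intro u hu
    have h2 : (inner ℂ (R (A (R u))) (R (A (R u))) : ℂ)
        = inner ℂ u (R (A (R (R (A (R u)))))) := by
      rw [hRmv, hAmv, hRmv]
    have h3 : R (A (R (R (A (R u))))) ∈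
        (Submodule.span ℂ (Set.range e)).topologicalClosure := by
      rw [show A (R (R (A (R u)))) = Ks (A (R u)) from by rw [hKs_eq, comp_apply, hSR]]
      exact hcomplete _
    have h4 := hu _ h3
    have h5 : (inner ℂ u (R (A (R (R (A (R u)))))) : ℂ) = 0 := by
      rw [← inner_conj_symm, h4, map_zero]
    rw [h5] at h2
    exact inner_self_eq_zero.mp h2
  have hwE : ∀ u : H, (∀ j, (inner ℂ (e j) u : ℂ) = 0) →
      ∀ v ∈ (Submodule.span ℂ (Set.range e)).topologicalClosure, (inner ℂ v u : ℂ) = 0 := by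
    intro u hu
    have h1 : u ∈ ((Submodule.span ℂ (Set.range e)).topologicalClosure)ᗮ := by
      rw [orth_closure' _]
      exact mem_orth_span' (by rintro v ⟨i, rfl⟩; exact hu i)
    exact fun v hv => (Submodule.mem_orthogonal _ _).mp h1 v hv
  constructor
  · -- statement for K* and ξ
    intro ξ
    constructor
    · intro htop j
      intro h0
      rw [Submodule.topologicalClosure_eq_top_iff] at htop
      have hmem : g j ∈ (Submodule.span ℂ (Set.range fun n : ℕ => (Ks ^ n) ξ))ᗮ := by
        apply mem_orth_span'
        rintro u ⟨n, rfl⟩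
        rw [← inner_conj_symm, hcoefKs j ξ n, h0, mul_zero, map_zero]
      rw [htop] at hmem
      exact hgne j ((Submodule.mem_bot ℂ).mp hmem)
    · intro hnz
      rw [Submodule.topologicalClosure_eq_top_iff, Submodule.eq_bot_iff]
      intro y hy
      have horb : ∀ n : ℕ, (inner ℂ ((Ks ^ n) ξ) y : ℂ) = 0 := fun n =>
        (Submodule.mem_orthogonal _ _).mp hy _ (Submodule.subset_span ⟨n, rfl⟩)
      have hd0 : ∀ j, (inner ℂ (e j) (R (A y)) : ℂ) = 0 := by
        apply engine' horth hlam hlam_inj hlamlim (x0 := R ξ)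
          (Z := fun m => R ((Ks ^ m) ξ))
        · intro j
          rw [← hRmv (e j) ξ, ← hgR j]
          exact hnz j
        · intro m hm
          obtain ⟨k, rfl⟩ : ∃ k, m = k + 1 := ⟨m - 1, by omega⟩
          rw [show (Ks ^ (k+1)) ξ = Ks ((Ks ^ k) ξ) from by rw [pow_succ']; rfl]
          exact hcomplete _
        · intro j m hm
          have hL : (inner ℂ (e j) (R ((Ks ^ m) ξ)) : ℂ) = (lam j : ℂ) ^ m * inner ℂ (g j) ξ := by
            rw [← hRmv (e j) _, ← hgR j, hcoefKs j ξ m]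
          have hR' : (inner ℂ (e j) (R ξ) : ℂ) = inner ℂ (g j) ξ := by
            rw [← hRmv (e j) ξ, ← hgR j]
          rw [hL, hR']
        · intro m hm
          rw [hRmv, ← hSR (A y)]
          rw [show S (A y) = K y from rfl]
          rw [show (inner ℂ ((Ks ^ m) ξ) (K y) : ℂ) = inner ℂ (Ks ((Ks ^ m) ξ)) y from
            (adjoint_inner_left K _ _).symm]
          rw [show Ks ((Ks ^ m) ξ) = (Ks ^ (m+1)) ξ from by rw [pow_succ']; rfl]
          exact horb (m+1)
      have hASA : Ks (A y) = 0 := by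
        apply hRinj
        have := hT0 (R (A y)) (hwE _ hd0)
        rw [show A (R (R (A y))) = Ks (A y) from by rw [hKs_eq, comp_apply, hSR]] at this
        exact this
      have hASA' : A (S (A y)) = 0 := by
        rw [show A (S (A y)) = Ks (A y) from by rw [hKs_eq]; rfl]
        exact hASA
      have h6 : (inner ℂ (S (A y)) (A y) : ℂ) = 0 := by
        rw [← hAmv (S (A y)) y, hASA', inner_zero_left]
      have h7 : (inner ℂ (R (A y)) (R (A y)) : ℂ) = 0 := by
        rw [← hRmv (R (A y)) (A y), ← hSR (A y)]
        exact h6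
      have hRAy : R (A y) = 0 := inner_self_eq_zero.mp h7
      have hKy : K y = 0 := by
        rw [show K y = S (A y) from rfl, hSR (A y), hRAy, map_zero]
      exact hK_inj (by rw [hKy, map_zero])
  · -- statement for K and η
    intro η
    constructor
    · intro htop j
      intro h0
      rw [Submodule.topologicalClosure_eq_top_iff] at htop
      have hmem : f j ∈ (Submodule.span ℂ (Set.range fun n : ℕ => (K ^ n) η))ᗮ := by
        apply mem_orth_span'
        rintro u ⟨n, rfl⟩
        have h2 : (inner ℂ (f j) ((K ^ n) η) : ℂ) = 0 := by
          rw [show (inner ℂ (f j) ((K ^ n) η) : ℂ) = inner ℂ (adjoint (K ^ n) (f j)) η from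
            (adjoint_inner_left (K ^ n) _ _).symm]
          rw [show adjoint (K ^ n) = Ks ^ n from by
            rw [hKs, ← star_eq_adjoint, ← star_eq_adjoint, ← star_pow]]
          rw [show (Ks ^ n) (f j) = ((lam j : ℂ)) ^ n • f j from by
            induction n with
            | zero => simp
            | succ n ih =>
              rw [show (Ks ^ (n+1)) (f j) = (Ks ^ n) (Ks (f j)) from by rw [pow_succ]; rfl,
                hKsf j, map_smul, ih, smul_smul, ← pow_succ']]
          rw [inner_smul_left, map_pow, Complex.conj_ofReal, h0, mul_zero]
        rw [← inner_conj_symm, h2, map_zero]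
      rw [htop] at hmem
      exact hfne j ((Submodule.mem_bot ℂ).mp hmem)
    · intro hnz
      rw [Submodule.topologicalClosure_eq_top_iff, Submodule.eq_bot_iff]
      intro y hy
      have horb : ∀ n : ℕ, (inner ℂ ((K ^ n) η) y : ℂ) = 0 := fun n =>
        (Submodule.mem_orthogonal _ _).mp hy _ (Submodule.subset_span ⟨n, rfl⟩)
      have hSKs : ∀ (m : ℕ) (x : H), S ((Ks ^ m) (A x)) = (K ^ (m+1)) x := by
        intro m
        induction m with
        | zero =>
          intro x
          rw [show (Ks ^ 0) (A x) = A x from rfl, pow_one]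
          rfl
        | succ n ih =>
          intro x
          rw [show (Ks ^ (n+1)) (A x) = (Ks ^ n) (Ks (A x)) from by rw [pow_succ]; rfl]
          rw [show Ks (A x) = A (K x) from by rw [hKs_eq]; rfl]
          rw [ih (K x)]
          rw [show (K ^ (n+1)) (K x) = (K ^ (n+1+1)) x from by rw [pow_succ]; rfl]
      have hd0 : ∀ j, (inner ℂ (e j) (R y) : ℂ) = 0 := by
        apply engine' horth hlam hlam_inj hlamlim (x0 := R (A η))
          (Z := fun m => R ((Ks ^ m) (A η)))
        · intro j
          have h1 : (inner ℂ (e j) (R (A η)) : ℂ) = (lam j : ℂ) * inner ℂ (f j) η := by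
            rw [← hRmv (e j) (A η), ← hgR j, ← hAmv (g j) η]
            rw [show A (g j) = Ks (f j) from by rw [hg j, hKs_eq]; rfl]
            rw [hKsf j, inner_smul_left, Complex.conj_ofReal]
          rw [h1]
          exact mul_ne_zero (Complex.ofReal_ne_zero.mpr (hlam j)) (hnz j)
        · intro m hm
          obtain ⟨k, rfl⟩ : ∃ k, m = k + 1 := ⟨m - 1, by omega⟩
          rw [show (Ks ^ (k+1)) (A η) = Ks ((Ks ^ k) (A η)) from by rw [pow_succ']; rfl]
          exact hcomplete _
        · intro j m hm
          have hL : (inner ℂ (e j) (R ((Ks ^ m) (A η))) : ℂ)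
              = (lam j : ℂ) ^ m * inner ℂ (g j) (A η) := by
            rw [← hRmv (e j) _, ← hgR j, hcoefKs j (A η) m]
          have hR' : (inner ℂ (e j) (R (A η)) : ℂ) = inner ℂ (g j) (A η) := by
            rw [← hRmv (e j) (A η), ← hgR j]
          rw [hL, hR']
        · intro m hm
          rw [← hRmv (R ((Ks ^ m) (A η))) y, ← hSR, hSKs m η]
          exact horb (m+1)
      have hKsy : Ks y = 0 := by
        apply hRinj
        have := hT0 (R y) (hwE _ hd0)
        rw [show A (R (R y)) = Ks y from by rw [hKs_eq, comp_apply, hSR]] at this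
        exact this
      have hASy : A (S y) = 0 := by
        rw [show A (S y) = Ks y from by rw [hKs_eq]; rfl]
        exact hKsy
      have hKSy : K (S y) = 0 := by
        rw [show K (S y) = S (A (S y)) from rfl, hASy, map_zero]
      have hSy : S y = 0 := hK_inj (by rw [hKSy, map_zero])
      exact hSinj y hSy
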